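/- Let T be a homeomorphism of a compact metric space X with f̄_{n,δ}(x,y) ≤ δ for all n ≥ n_0 (for some δ < ε/2 chosen so that δ-closeness of points implies ε-closeness of their flow images for times in [0,1]). Then for every t ≥ t_0 (with t_0 > n_0 and t_0·ε/4 > 1), the points x and y are (t,ε,ε)-matchable under the flow: there is a piecewise-isometric translation h: A → A' on a union of unit intervals A ⊆ [0,t] with λ(A) > (1-ε)t witnessing f̃_{t,ε}(x,y) ≤ ε. -/

import Mathlib

open MeasureTheory Filter Set Topology
open scoped ENNReal symmDiff

section FK

structure IsFlow {X : Type*} [TopologicalSpace X] (Φ : ℝ → X → X) : Prop where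
  cont : Continuous fun p : ℝ × X => Φ p.1 p.2
  map_zero : ∀ x, Φ 0 x = x
  map_add : ∀ t s x, Φ (t + s) x = Φ s (Φ t x)

variable {X : Type*} [MetricSpace X]

/-- `x` and `y` are `(t,ε,δ)`-matchable: there are measurable `A, A' ⊆ [0,t]` of Lebesgue
measure `> (1-ε)t` and an increasing absolutely continuous onto map `h : A → A'`
(with a.e. derivative `h'`) with `|h' - 1| < ε` and `d(φ^s x, φ^{h s} y) < δ` on `A`. -/
def Matchable (Φ : ℝ → X → X) (x y : X) (t ε δ : ℝ) : Prop :=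
  ∃ (A A' : Set ℝ) (h h' : ℝ → ℝ),
    MeasurableSet A ∧ MeasurableSet A' ∧
    A ⊆ Icc 0 t ∧ A' ⊆ Icc 0 t ∧
    ENNReal.ofReal ((1 - ε) * t) < volume A ∧
    ENNReal.ofReal ((1 - ε) * t) < volume A' ∧
    MapsTo h A A' ∧ SurjOn h A A' ∧ StrictMonoOn h A ∧
    (∀ B ⊆ A, MeasurableSet B → volume (h '' B) = ENNReal.ofReal (∫ s in B, h' s)) ∧
    (∀ s ∈ A, |h' s - 1| < ε) ∧
    (∀ s ∈ A, dist (Φ s x) (Φ (h s) y) < δ)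

/-- The `(t,δ)`-gap `f̃_{t,δ}(x,y)`; by convention it equals `1` when no matching exists. -/
noncomputable def fkGap (Φ : ℝ → X → X) (t δ : ℝ) (x y : X) : ℝ :=
  sInf ({ε : ℝ | 0 < ε ∧ Matchable Φ x y t ε δ} ∪ {1})

/-- `f̃_δ(x,y) = limsup_{t → ∞} f̃_{t,δ}(x,y)`. -/
noncomputable def fkDist (Φ : ℝ → X → X) (δ : ℝ) (x y : X) : ℝ :=
  Filter.limsup (fun t => fkGap Φ t δ x y) Filter.atTop

/-- The Feldman–Katok pseudometric for flows. -/
noncomputable def rhoFK (Φ : ℝ → X → X) (x y : X) : ℝ :=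
  sInf {δ : ℝ | 0 < δ ∧ fkDist Φ δ x y < δ}

/-- Discrete `(n,δ)`-matching of cardinality `k` for a map `T`. -/
def DMatching (T : X → X) (x y : X) (n : ℕ) (δ : ℝ) (k : ℕ) : Prop :=
  ∃ (D D' : Finset ℕ) (π : ℕ → ℕ),
    D ⊆ Finset.range n ∧ D' ⊆ Finset.range n ∧ D.card = k ∧
    Set.BijOn π ↑D ↑D' ∧ StrictMonoOn π ↑D ∧
    ∀ i ∈ D, dist (T^[i] x) (T^[π i] y) < δ

/-- The discrete `(n,δ)`-gap `f̄_{n,δ}(x,y)`. -/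
noncomputable def dGap (T : X → X) (n : ℕ) (δ : ℝ) (x y : X) : ℝ :=
  1 - ((sSup {k : ℕ | DMatching T x y n δ k} : ℕ) : ℝ) / n

/-- `f̄_δ(x,y) = limsup_{n → ∞} f̄_{n,δ}(x,y)`. -/
noncomputable def dFKdist (T : X → X) (δ : ℝ) (x y : X) : ℝ :=
  Filter.limsup (fun n : ℕ => dGap T n δ x y) Filter.atTop

/-- The discrete Feldman–Katok pseudometric. -/
noncomputable def dRhoFK (T : X → X) (x y : X) : ℝ :=
  sInf {δ : ℝ | 0 < δ ∧ dFKdist T δ x y ≤ δ}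

variable [MeasurableSpace X] [BorelSpace X]

/-- The `t`-empirical measure `μ_{x,t} = (1/t) ∫_0^t δ_{φ^s x} ds`. -/
noncomputable def empMeasure (Φ : ℝ → X → X) (x : X) (t : ℝ) : Measure X :=
  (ENNReal.ofReal (1 / t)) • Measure.map (fun s => Φ s x) (volume.restrict (Icc 0 t))

/-- `x` is generic for `μ`: empirical measures converge to `μ` in the weak* topology. -/
def Generic (Φ : ℝ → X → X) (μ : Measure X) (x : X) : Prop :=
  ∀ f : C(X, ℝ), Tendsto (fun t => ∫ z, f z ∂(empMeasure Φ x t)) atTop (𝓝 (∫ z, f z ∂μ))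

def FlowInvariant (Φ : ℝ → X → X) (μ : Measure X) : Prop :=
  ∀ t : ℝ, MeasurePreserving (Φ t) μ μ

def FlowErgodic (Φ : ℝ → X → X) (μ : Measure X) : Prop :=
  FlowInvariant Φ μ ∧
    ∀ A : Set X, MeasurableSet A → (∀ t, Φ t ⁻¹' A = A) → μ A = 0 ∨ μ A = 1

/-- The Prokhorov metric. -/
noncomputable def prokhorov (μ ν : Measure X) : ℝ :=
  sInf {ε : ℝ | 0 < ε ∧ ∀ B : Set X, MeasurableSet B →
    μ B ≤ ν (Metric.thickening ε B) + ENNReal.ofReal ε}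

/-- A finite Borel partition of `X`, indexed by `ℕ` with all but finitely many cells empty. -/
structure BPartition (X : Type*) [MeasurableSpace X] where
  cells : ℕ → Set X
  measurable : ∀ j, MeasurableSet (cells j)
  disj : Pairwise (Function.onFun Disjoint cells)
  cover : ⋃ j, cells j = Set.univ
  finite : ∃ n, ∀ j, n ≤ j → cells j = ∅

/-- The partition pseudometric `d_μ(P,Q)` (infimum over orderings of
`μ {x : P(x) ≠ Q(x)}`). -/
noncomputable def dPart (μ : Measure X) (P Q : ℕ → Set X) : ℝ :=
  ⨅ σ : Equiv.Perm ℕ, (μ (⋃ j, P j \ Q (σ j))).toReal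

/-- `(t,ε,P)`-matchability with respect to a partition `P` (Ratner). -/
def PMatchable (Φ : ℝ → X → X) (P : ℕ → Set X) (x y : X) (t ε : ℝ) : Prop :=
  ∃ (A A' : Set ℝ) (h h' : ℝ → ℝ),
    MeasurableSet A ∧ MeasurableSet A' ∧
    A ⊆ Icc 0 t ∧ A' ⊆ Icc 0 t ∧
    ENNReal.ofReal ((1 - ε) * t) < volume A ∧
    ENNReal.ofReal ((1 - ε) * t) < volume A' ∧
    MapsTo h A A' ∧ SurjOn h A A' ∧ StrictMonoOn h A ∧
    (∀ B ⊆ A, MeasurableSet B → volume (h '' B) = ENNReal.ofReal (∫ s in B, h' s)) ∧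
    (∀ s ∈ A, |h' s - 1| < ε) ∧
    (∀ s ∈ A, ∀ j, Φ s x ∈ P j ↔ Φ (h s) y ∈ P j)

/-- `f_t(x,y,P)`. -/
noncomputable def fPart (Φ : ℝ → X → X) (P : ℕ → Set X) (t : ℝ) (x y : X) : ℝ :=
  sInf ({ε : ℝ | 0 < ε ∧ PMatchable Φ P x y t ε} ∪ {1})

/-- The `(t,P)`-ball of radius `ε` centered at `x`. -/
def PBall (Φ : ℝ → X → X) (P : ℕ → Set X) (t ε : ℝ) (x : X) : Set X :=
  {y | fPart Φ P t x y < ε}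

/-- `K_t(ε,P)`: minimal cardinality of an `(ε,t,P)`-cover (`⊤` if none exists). -/
noncomputable def Kt (μ : Measure X) (Φ : ℝ → X → X) (P : ℕ → Set X) (ε t : ℝ) : ℝ≥0∞ :=
  sInf ((fun C : Finset X => (C.card : ℝ≥0∞)) ''
    {C : Finset X | ENNReal.ofReal (1 - ε) < μ (⋃ x ∈ C, PBall Φ P t ε x)})

/-- `β(u,ε,P) = liminf_{t→∞} log K_t(ε,P) / u(t)`. -/
noncomputable def betaU (μ : Measure X) (Φ : ℝ → X → X) (P : ℕ → Set X) (u : ℝ → ℝ)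
    (ε : ℝ) : EReal :=
  Filter.liminf (fun t => ENNReal.log (Kt μ Φ P ε t) / (ENNReal.ofReal (u t) : EReal))
    Filter.atTop

/-- `e(u,P) = limsup_{ε→0⁺} β(u,ε,P)`. -/
noncomputable def eUP (μ : Measure X) (Φ : ℝ → X → X) (P : ℕ → Set X) (u : ℝ → ℝ) : EReal :=
  Filter.limsup (fun ε => betaU μ Φ P u ε) (𝓝[>] (0 : ℝ))

/-- `e(Φ,u) = sup_P e(u,P)`. -/
noncomputable def ePhi (μ : Measure X) (Φ : ℝ → X → X) (u : ℝ → ℝ) : EReal :=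
  ⨆ P : BPartition X, eUP μ Φ P.cells u

end FK


theorem stmt18 {X : Type*} [MetricSpace X] [CompactSpace X] (Φ : ℝ → X → X) (hΦ : IsFlow Φ) (x y : X)
    (ε δ : ℝ) (hε : 0 < ε) (hε1 : ε < 1) (hδ0 : 0 < δ) (hδε : δ < ε / 2)
    (hflow : ∀ w z : X, dist w z < δ → ∀ s ∈ Set.Icc (0:ℝ) 1, dist (Φ s w) (Φ s z) < ε)
    (n₀ : ℕ) (hn₀ : ∀ n : ℕ, n₀ ≤ n → dGap (Φ 1) n δ x y ≤ δ)
    (t₀ : ℝ) (ht₀n : (n₀ : ℝ) < t₀) (ht₀ε : 1 < t₀ * ε / 4) :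
    ∀ t : ℝ, t₀ ≤ t → Matchable Φ x y t ε ε ∧ fkGap Φ t ε x y ≤ ε := by
  classical
  intro t ht
  have ht₀4 : 4 < t₀ * ε := by linarith
  have ht₀pos : 0 < t₀ := by nlinarith
  have htε : 4 < t * ε := by nlinarith
  have ht0 : 0 < t := lt_of_lt_of_le ht₀pos ht
  set n : ℕ := ⌊t⌋₊ with hndef
  have hnt : (n : ℝ) ≤ t := Nat.floor_le ht0.le
  have htn1 : t < (n : ℝ) + 1 := Nat.lt_floor_add_one t
  have hn₀n : n₀ ≤ n := Nat.le_floor (by exact_mod_cast le_trans ht₀n.le ht)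
  -- extract a maximal discrete matching for length n + 1
  have hgap := hn₀ (n + 1) (by omega)
  set S : Set ℕ := {k | DMatching (Φ 1) x y (n + 1) δ k} with hSdef
  have h0S : 0 ∈ S := by
    refine ⟨∅, ∅, id, by simp, by simp, by simp, ?_, ?_, by simp⟩
    · simpa using Set.bijOn_empty (id : ℕ → ℕ)
    · intro a ha; simp at ha
  have hbddS : ∀ k ∈ S, k ≤ n + 1 := by
    rintro k ⟨D, D', π, hD, -, hcard, -⟩
    calc k = D.card := hcard.symm
      _ ≤ (Finset.range (n+1)).card := Finset.card_le_card hD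
      _ = n + 1 := Finset.card_range _
  have hKmem : sSup S ∈ S := Nat.sSup_mem ⟨0, h0S⟩ ⟨n + 1, hbddS⟩
  set K : ℕ := sSup S with hKdef
  have hKge : (1 - δ) * ((n : ℝ) + 1) ≤ (K : ℝ) := by
    have hgap' : 1 - (K : ℝ) / ((n : ℝ) + 1) ≤ δ := by
      unfold dGap at hgap
      rw [← hSdef, ← hKdef] at hgap
      push_cast at hgap ⊢
      convert hgap using 3
    have hpos : (0 : ℝ) < (n : ℝ) + 1 := by positivity
    rw [sub_le_iff_le_add] at hgap'
    have h3 := mul_le_mul_of_nonneg_right hgap' hpos.le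
    rw [add_mul, div_mul_cancel₀ _ hpos.ne'] at h3
    nlinarith [h3]
  obtain ⟨D, D', π, hD, hD', hcard, hbij, hpmono, hpdist⟩ := hKmem
  -- the good indices
  set D₀ : Finset ℕ := D.filter (fun k => k < n ∧ π k < n) with hD₀def
  have hD₀sub : D₀ ⊆ D := Finset.filter_subset _ _
  have hπle : ∀ k ∈ D, π k ≤ n := by
    intro k hk
    have h1 : π k ∈ (D' : Set ℕ) := hbij.mapsTo (Finset.mem_coe.mpr hk)
    have h2 := hD' (Finset.mem_coe.mp h1)
    simp only [Finset.mem_range] at h2; omega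
  have hcard2 : D.card ≤ D₀.card + 2 := by
    have hsub : D.filter (fun k => ¬(k < n ∧ π k < n)) ⊆
        D.filter (fun k => k = n) ∪ D.filter (fun k => π k = n) := by
      intro k hk
      simp only [Finset.mem_filter, Finset.mem_union] at hk ⊢
      obtain ⟨hkD, hne⟩ := hk
      have hkn : k ≤ n := by
        have := hD hkD; simp only [Finset.mem_range] at this; omega
      have hπn : π k ≤ n := hπle k hkD
      by_cases hk1 : k < n
      · right; refine ⟨hkD, ?_⟩; omega
      · left; exact ⟨hkD, by omega⟩
    have c1 : (D.filter (fun k => k = n)).card ≤ 1 := by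
      apply Finset.card_le_one.mpr
      intro a ha b hb
      simp only [Finset.mem_filter] at ha hb
      omega
    have c2 : (D.filter (fun k => π k = n)).card ≤ 1 := by
      apply Finset.card_le_one.mpr
      intro a ha b hb
      simp only [Finset.mem_filter] at ha hb
      exact hbij.injOn (Finset.mem_coe.mpr ha.1) (Finset.mem_coe.mpr hb.1)
        (ha.2.trans hb.2.symm)
    have hneg : (D.filter (fun k => ¬(k < n ∧ π k < n))).card ≤ 2 :=
      (Finset.card_le_card hsub).trans ((Finset.card_union_le _ _).trans (by omega))
    have := Finset.card_filter_add_card_filter_not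
      (s := D) (p := fun k => k < n ∧ π k < n)
    rw [hD₀def]; omega
  have hD₀t : (1 - ε) * t < (D₀.card : ℝ) := by
    have h1 : (1 - δ) * ((n : ℝ) + 1) ≤ (D.card : ℝ) := by rw [hcard]; exact hKge
    have h2 : (D.card : ℝ) ≤ (D₀.card : ℝ) + 2 := by exact_mod_cast hcard2
    nlinarith [mul_nonneg (by linarith : (0:ℝ) ≤ 1 - δ) (by linarith : (0:ℝ) ≤ (n:ℝ) + 1 - t),
      mul_pos ht0 (by linarith : (0:ℝ) < ε / 2 - δ)]
  have hD₀pos : (0 : ℝ) < (D₀.card : ℝ) := by nlinarith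
  -- flow iterates
  have hiter : ∀ (k : ℕ) (z : X), (Φ 1)^[k] z = Φ (k : ℝ) z := by
    intro k
    induction k with
    | zero => intro z; simp [hΦ.map_zero]
    | succ m ih =>
      intro z
      rw [Function.iterate_succ_apply', ih]
      have e : ((m + 1 : ℕ) : ℝ) = (m : ℝ) + 1 := by push_cast; ring
      rw [e, hΦ.map_add]
  -- the continuous matching
  set A : Set ℝ := ⋃ k ∈ D₀, Ico (k : ℝ) ((k : ℝ) + 1) with hAdef
  set A' : Set ℝ := ⋃ k ∈ D₀, Ico ((π k : ℕ) : ℝ) (((π k : ℕ) : ℝ) + 1) with hA'def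
  set h : ℝ → ℝ := fun s => s - (⌊s⌋₊ : ℝ) + ((π ⌊s⌋₊ : ℕ) : ℝ) with hhdef
  have hval : ∀ k : ℕ, ∀ s ∈ Ico (k : ℝ) ((k : ℝ) + 1),
      h s = s - (k : ℝ) + ((π k : ℕ) : ℝ) := by
    intro k s hs
    have hfl : ⌊s⌋₊ = k := by
      rw [Nat.floor_eq_iff (le_trans (Nat.cast_nonneg k) hs.1)]
      exact ⟨hs.1, hs.2⟩
    simp only [hhdef, hfl]
  have hmemA : ∀ s ∈ A, ∃ k ∈ D₀, s ∈ Ico (k : ℝ) ((k : ℝ) + 1) := by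
    intro s hs
    rw [hAdef] at hs
    obtain ⟨k, h1, h2, h3⟩ := by simpa using hs
    exact ⟨k, h2, h1, h3⟩
  have hmemA' : ∀ u ∈ A', ∃ k ∈ D₀, u ∈ Ico ((π k : ℕ) : ℝ) (((π k : ℕ) : ℝ) + 1) := by
    intro u hu
    rw [hA'def] at hu
    obtain ⟨k, h1, h2, h3⟩ := by simpa using hu
    exact ⟨k, h2, h1, h3⟩
  have hdisjIco : ∀ a b : ℕ, a ≠ b →
      Disjoint (Ico (a : ℝ) ((a : ℝ) + 1)) (Ico (b : ℝ) ((b : ℝ) + 1)) := by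
    intro a b hab
    rw [Set.Ico_disjoint_Ico]
    rcases lt_or_gt_of_ne hab with hlt | hlt
    · have : (a : ℝ) + 1 ≤ b := by exact_mod_cast hlt
      calc min ((a:ℝ)+1) ((b:ℝ)+1) ≤ (a:ℝ)+1 := min_le_left _ _
        _ ≤ (b : ℝ) := this
        _ ≤ max (a:ℝ) (b:ℝ) := le_max_right _ _
    · have : (b : ℝ) + 1 ≤ a := by exact_mod_cast hlt
      calc min ((a:ℝ)+1) ((b:ℝ)+1) ≤ (b:ℝ)+1 := min_le_right _ _
        _ ≤ (a : ℝ) := this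
        _ ≤ max (a:ℝ) (b:ℝ) := le_max_left _ _
  have hvolIco : ∀ k : ℕ, volume (Ico (k : ℝ) ((k : ℝ) + 1)) = 1 := by
    intro k; rw [Real.volume_Ico]; simp
  have hmeasA : MeasurableSet A :=
    D₀.measurableSet_biUnion (fun _ _ => measurableSet_Ico)
  have hmeasA' : MeasurableSet A' :=
    D₀.measurableSet_biUnion (fun _ _ => measurableSet_Ico)
  have hsubA : A ⊆ Icc 0 t := by
    intro s hs
    obtain ⟨k, hk, hsk⟩ := hmemA s hs
    have hkn : k < n := (Finset.mem_filter.mp hk).2.1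
    have : (k : ℝ) + 1 ≤ n := by exact_mod_cast hkn
    exact ⟨le_trans (Nat.cast_nonneg k) hsk.1, by linarith [hsk.2]⟩
  have hsubA' : A' ⊆ Icc 0 t := by
    intro u hu
    obtain ⟨k, hk, huk⟩ := hmemA' u hu
    have hkn : π k < n := (Finset.mem_filter.mp hk).2.2
    have : ((π k : ℕ) : ℝ) + 1 ≤ n := by exact_mod_cast hkn
    exact ⟨le_trans (Nat.cast_nonneg _) huk.1, by linarith [huk.2]⟩
  have hinj₀ : ∀ a ∈ D₀, ∀ b ∈ D₀, a ≠ b → π a ≠ π b := by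
    intro a ha b hb hab hπ
    exact hab (hbij.injOn (Finset.mem_coe.mpr (hD₀sub ha))
      (Finset.mem_coe.mpr (hD₀sub hb)) hπ)
  have hvolA : volume A = (D₀.card : ℝ≥0∞) := by
    rw [hAdef, measure_biUnion_finset (fun a _ b _ hab => hdisjIco a b hab)
      (fun _ _ => measurableSet_Ico)]
    simp [hvolIco]
  have hvolA' : volume A' = (D₀.card : ℝ≥0∞) := by
    rw [hA'def, measure_biUnion_finset
      (fun a ha b hb hab => hdisjIco (π a) (π b) (hinj₀ a ha b hb hab))
      (fun _ _ => measurableSet_Ico)]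
    simp [hvolIco]
  have hvollt : ENNReal.ofReal ((1 - ε) * t) < (D₀.card : ℝ≥0∞) := by
    rw [← ENNReal.ofReal_natCast]
    exact (ENNReal.ofReal_lt_ofReal_iff hD₀pos).mpr hD₀t
  -- MapsTo
  have hmaps : MapsTo h A A' := by
    intro s hs
    obtain ⟨k, hk, hsk⟩ := hmemA s hs
    rw [hval k s hsk]
    apply Set.mem_biUnion hk
    exact ⟨by linarith [hsk.1], by linarith [hsk.2]⟩
  -- SurjOn
  have hsurj : SurjOn h A A' := by
    intro u hu
    obtain ⟨k, hk, huk⟩ := hmemA' u hu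
    have hmem : u - ((π k : ℕ) : ℝ) + (k : ℝ) ∈ Ico (k : ℝ) ((k : ℝ) + 1) :=
      ⟨by linarith [huk.1], by linarith [huk.2]⟩
    refine ⟨u - ((π k : ℕ) : ℝ) + (k : ℝ), Set.mem_biUnion hk hmem, ?_⟩
    rw [hval k _ hmem]; ring
  -- StrictMonoOn
  have hsm : StrictMonoOn h A := by
    intro s hs s' hs' hss
    obtain ⟨k, hk, hsk⟩ := hmemA s hs
    obtain ⟨k', hk', hsk'⟩ := hmemA s' hs'
    rw [hval k s hsk, hval k' s' hsk']
    rcases eq_or_ne k k' with rfl | hne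
    · linarith
    · have hkk' : k < k' := by
        by_contra hle
        push_neg at hle
        have hk'k : k' < k := by omega
        have : (k' : ℝ) + 1 ≤ k := by exact_mod_cast hk'k
        linarith [hsk.1, hsk'.2]
      have hππ : π k < π k' := hpmono (Finset.mem_coe.mpr (hD₀sub hk))
        (Finset.mem_coe.mpr (hD₀sub hk')) hkk'
      have e1 : ((π k : ℕ) : ℝ) + 1 ≤ ((π k' : ℕ) : ℝ) := by exact_mod_cast hππ
      linarith [hsk.1, hsk.2, hsk'.1]
  -- volume of images
  have hBfin : ∀ B : Set ℝ, B ⊆ A → volume B ≠ ⊤ := by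
    intro B hBA
    exact ne_top_of_le_ne_top (by simp [hvolA]) (measure_mono hBA)
  have himg : ∀ B ⊆ A, MeasurableSet B →
      volume (h '' B) = ENNReal.ofReal (∫ s in B, (1 : ℝ)) := by
    intro B hBA hBm
    have hBdecomp : B = ⋃ k ∈ D₀, (B ∩ Ico (k : ℝ) ((k : ℝ) + 1)) := by
      ext s
      simp only [Set.mem_iUnion, Set.mem_inter_iff, exists_prop]
      constructor
      · intro hs
        obtain ⟨k, hk, hsk⟩ := hmemA s (hBA hs)
        exact ⟨k, hk, hs, hsk⟩
      · rintro ⟨k, -, hs, -⟩; exact hs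
    have himgeq : h '' B =
        ⋃ k ∈ D₀, (fun s => s + (((π k : ℕ) : ℝ) - (k : ℝ))) ''
          (B ∩ Ico (k : ℝ) ((k : ℝ) + 1)) := by
      conv_lhs => rw [hBdecomp]
      rw [Set.image_iUnion₂]
      apply Set.iUnion₂_congr
      intro k hk
      apply Set.image_congr
      intro s hs
      rw [hval k s hs.2]; ring
    have hpiece_meas : ∀ k : ℕ, k ∈ D₀ → MeasurableSet
        ((fun s => s + (((π k : ℕ) : ℝ) - (k : ℝ))) ''
          (B ∩ Ico (k : ℝ) ((k : ℝ) + 1))) := by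
      intro k _
      rw [Set.image_add_right]
      exact (hBm.inter measurableSet_Ico).preimage (measurable_add_const _)
    have hpiece_vol : ∀ k : ℕ, volume
        ((fun s => s + (((π k : ℕ) : ℝ) - (k : ℝ))) ''
          (B ∩ Ico (k : ℝ) ((k : ℝ) + 1))) = volume (B ∩ Ico (k : ℝ) ((k : ℝ) + 1)) := by
      intro k
      rw [Set.image_add_right]
      exact measure_preimage_add_right volume _ _
    have hpiece_sub : ∀ k : ℕ,
        (fun s => s + (((π k : ℕ) : ℝ) - (k : ℝ))) '' (B ∩ Ico (k : ℝ) ((k : ℝ) + 1)) ⊆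
          Ico ((π k : ℕ) : ℝ) (((π k : ℕ) : ℝ) + 1) := by
      rintro k u ⟨s, hs, rfl⟩
      obtain ⟨-, h1, h2⟩ := hs
      simp only [Set.mem_Ico]
      constructor <;> linarith
    have hLHS : volume (h '' B) = ∑ k ∈ D₀, volume (B ∩ Ico (k : ℝ) ((k : ℝ) + 1)) := by
      rw [himgeq, measure_biUnion_finset ?_ hpiece_meas]
      · exact Finset.sum_congr rfl (fun k _ => hpiece_vol k)
      · intro a ha b hb hab
        exact ((hdisjIco (π a) (π b) (hinj₀ a ha b hb hab)).mono
          (hpiece_sub a) (hpiece_sub b))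
    have hRHS : volume B = ∑ k ∈ D₀, volume (B ∩ Ico (k : ℝ) ((k : ℝ) + 1)) := by
      conv_lhs => rw [hBdecomp]
      exact measure_biUnion_finset
        (fun a ha b hb hab => ((hdisjIco a b hab).mono inter_subset_right inter_subset_right))
        (fun k _ => hBm.inter measurableSet_Ico)
    rw [hLHS, ← hRHS, MeasureTheory.setIntegral_const, smul_eq_mul, mul_one,
      measureReal_def, ENNReal.ofReal_toReal (hBfin B hBA)]
  -- distance estimate
  have hdists : ∀ s ∈ A, dist (Φ s x) (Φ (h s) y) < ε := by
    intro s hs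
    obtain ⟨k, hk, hsk⟩ := hmemA s hs
    rw [hval k s hsk]
    have hkD : k ∈ D := hD₀sub hk
    have hd : dist (Φ (k : ℝ) x) (Φ ((π k : ℕ) : ℝ) y) < δ := by
      have hh := hpdist k hkD
      rwa [hiter k x, hiter (π k) y] at hh
    have hs1 : s - (k : ℝ) ∈ Icc (0 : ℝ) 1 := ⟨by linarith [hsk.1], by linarith [hsk.2]⟩
    have hfd := hflow _ _ hd (s - (k : ℝ)) hs1
    have e1 : Φ (s - (k : ℝ)) (Φ (k : ℝ) x) = Φ s x := by
      rw [← hΦ.map_add]; norm_num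
    have e2 : Φ (s - (k : ℝ)) (Φ ((π k : ℕ) : ℝ) y) = Φ (s - (k : ℝ) + ((π k : ℕ) : ℝ)) y := by
      rw [← hΦ.map_add]; ring_nf
    rw [e1, e2] at hfd
    exact hfd
  have hM : Matchable Φ x y t ε ε := by
    refine ⟨A, A', h, fun _ => 1, hmeasA, hmeasA', hsubA, hsubA', ?_, ?_,
      hmaps, hsurj, hsm, himg, ?_, hdists⟩
    · rw [hvolA]; exact hvollt
    · rw [hvolA']; exact hvollt
    · intro s _; simpa using hε
  refine ⟨hM, ?_⟩
  apply csInf_le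
  · refine ⟨0, ?_⟩
    rintro a (⟨ha, -⟩ | ha)
    · exact ha.le
    · simp only [Set.mem_singleton_iff] at ha; simp [ha]
  · exact Or.inl ⟨hε, hM⟩
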